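/- Let S = [[A, B], [C, D]] be a symplectic matrix. Then for every t in the orthogonal complement of ker(B), one has At = BAᵀ(B⁺)ᵀ t, where B⁺ is the Moore–Penrose pseudoinverse of B. -/

import Mathlib

open Matrix

theorem symplectic_A_eq_BAT_BpT_on_kerB_perp {d : ℕ} (A B C D Bp : Matrix (Fin d) (Fin d) ℝ)
    (hS : (fromBlocks A B C D)ᵀ * fromBlocks 0 1 (-1) 0 * fromBlocks A B C D
        = fromBlocks (0 : Matrix (Fin d) (Fin d) ℝ) 1 (-1) 0)
    (h1 : B * Bp * B = B) (h2 : Bp * B * Bp = Bp)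
    (h3 : (B * Bp)ᵀ = B * Bp) (h4 : (Bp * B)ᵀ = Bp * B) :
    ∀ t ∈ (LinearMap.ker (Matrix.toEuclideanLin B))ᗮ,
      Matrix.toEuclideanLin A t = Matrix.toEuclideanLin (B * Aᵀ * Bpᵀ) t := by
  have hmem : fromBlocks A B C D ∈ Matrix.symplecticGroup (Fin d) ℝ := by
    rw [SymplecticGroup.mem_iff']
    have hJ : Matrix.J (Fin d) ℝ = -(fromBlocks 0 1 (-1) 0) := by
      simp [Matrix.J, Matrix.fromBlocks_neg]
    rw [hJ]
    simp only [Matrix.mul_neg, Matrix.neg_mul, neg_inj]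
    exact hS
  have hmem' := SymplecticGroup.mem_iff.mp hmem
  have hblock := congrArg Matrix.toBlocks₁₁ hmem'
  simp [Matrix.J, Matrix.fromBlocks_multiply, Matrix.fromBlocks_transpose,
    Matrix.toBlocks_fromBlocks₁₁] at hblock
  rw [add_neg_eq_zero] at hblock
  have hAB : A * Bᵀ = B * Aᵀ := hblock.symm
  -- key matrix identities
  have h5 : Bᵀ * (B * Bp) = Bᵀ := by
    calc Bᵀ * (B * Bp) = Bᵀ * (B * Bp)ᵀ := by rw [h3]
      _ = (B * Bp * B)ᵀ := by simp [Matrix.transpose_mul, mul_assoc]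
      _ = Bᵀ := by rw [h1]
  have keymat : B * Aᵀ * Bpᵀ * Bᵀ = A * Bᵀ := by
    calc B * Aᵀ * Bpᵀ * Bᵀ = B * Aᵀ * (B * Bp)ᵀ := by
          rw [Matrix.transpose_mul, mul_assoc]
      _ = A * Bᵀ * (B * Bp) := by rw [h3, hAB]
      _ = A * (Bᵀ * (B * Bp)) := by rw [mul_assoc]
      _ = A * Bᵀ := by rw [h5]
  -- composition lemma
  have hmul : ∀ (M N : Matrix (Fin d) (Fin d) ℝ) (x : EuclideanSpace ℝ (Fin d)),
      Matrix.toEuclideanLin (M * N) x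
        = Matrix.toEuclideanLin M (Matrix.toEuclideanLin N x) := by
    intro M N x
    simp [Matrix.toEuclideanLin_apply, Matrix.mulVec_mulVec]
  intro t ht
  -- t is fixed by Bp * B
  have hproj : Matrix.toEuclideanLin (Bp * B) t = t := by
    set u := t - Matrix.toEuclideanLin (Bp * B) t with hu
    have hu1 : u ∈ LinearMap.ker (Matrix.toEuclideanLin B) := by
      rw [LinearMap.mem_ker, hu, map_sub, ← hmul]
      have : B * (Bp * B) = B := by rw [← mul_assoc, h1]
      rw [this, sub_self]
    have hsa : Matrix.toEuclideanLin (Bp * B)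
        = LinearMap.adjoint (Matrix.toEuclideanLin (Bp * B)) := by
      rw [← Matrix.toEuclideanLin_conjTranspose_eq_adjoint]
      congr 1
      rw [Matrix.conjTranspose_eq_transpose_of_trivial, h4]
    have hmem2 : Matrix.toEuclideanLin (Bp * B) t
        ∈ (LinearMap.ker (Matrix.toEuclideanLin B))ᗮ := by
      intro x hx
      have hx0 : Matrix.toEuclideanLin (Bp * B) x = 0 := by
        rw [hmul, LinearMap.mem_ker.mp hx, map_zero]
      calc inner ℝ x (Matrix.toEuclideanLin (Bp * B) t)
          = inner ℝ (Matrix.toEuclideanLin (Bp * B) t) x := real_inner_comm _ _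
        _ = inner ℝ t (Matrix.toEuclideanLin (Bp * B) x) := by
            conv_lhs => rw [hsa]
            exact LinearMap.adjoint_inner_left _ _ _
        _ = (0 : ℝ) := by rw [hx0, inner_zero_right]
    have hu2 : u ∈ (LinearMap.ker (Matrix.toEuclideanLin B))ᗮ :=
      Submodule.sub_mem _ ht hmem2
    have : u = 0 := by
      have h0 : inner ℝ u u = (0 : ℝ) := hu2 u hu1
      exact inner_self_eq_zero.mp h0
    rw [hu] at this
    exact (sub_eq_zero.mp this).symm
  have ht2 : Matrix.toEuclideanLin Bᵀ (Matrix.toEuclideanLin Bpᵀ t) = t := by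
    rw [← hmul]
    have hBB : Bᵀ * Bpᵀ = Bp * B := by rw [← Matrix.transpose_mul, h4]
    rw [hBB, hproj]
  calc Matrix.toEuclideanLin A t
      = Matrix.toEuclideanLin A (Matrix.toEuclideanLin Bᵀ (Matrix.toEuclideanLin Bpᵀ t)) := by
        rw [ht2]
    _ = Matrix.toEuclideanLin (A * Bᵀ) (Matrix.toEuclideanLin Bpᵀ t) := (hmul _ _ _).symm
    _ = Matrix.toEuclideanLin (B * Aᵀ * Bpᵀ * Bᵀ) (Matrix.toEuclideanLin Bpᵀ t) := by
        rw [keymat]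
    _ = Matrix.toEuclideanLin (B * Aᵀ * Bpᵀ)
          (Matrix.toEuclideanLin Bᵀ (Matrix.toEuclideanLin Bpᵀ t)) := by rw [hmul]
    _ = Matrix.toEuclideanLin (B * Aᵀ * Bpᵀ) t := by rw [ht2]
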